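/- A linear map f on a finite-dimensional real vector space V equipped with a nondegenerate symmetric bilinear form of Lorentz signature (1,n), which preserves the form and restricts to the identity on a codimension-one subspace U on which the form is degenerate (lightlike), is the identity on all of V. -/

import Mathlib

/-- A linear map preserving a Lorentz form and fixing pointwise a codimension-one
degenerate (lightlike) subspace is the identity. -/
theorem lorentz_fix_lightlike_hyperplane_eq_id
    {n : ℕ} {V : Type*} [AddCommGroup V] [Module ℝ V]
    (B : LinearMap.BilinForm ℝ V)
    (hsymm : ∀ x y : V, B x y = B y x)
    (b : Module.Basis (Fin (n + 1)) ℝ V)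
    (hb : ∀ i j, B (b i) (b j) =
      if i = j then (if (i : ℕ) = 0 then (-1 : ℝ) else 1) else 0)
    (U : Submodule ℝ V)
    (hUdim : Module.finrank ℝ U = n)
    (hdeg : ∃ u ∈ U, u ≠ 0 ∧ ∀ w ∈ U, B u w = 0)
    (f : V →ₗ[ℝ] V)
    (hf : ∀ x y : V, B (f x) (f y) = B x y)
    (hfix : ∀ u ∈ U, f u = u) :
    ∀ x : V, f x = x := by
  classical
  haveI : FiniteDimensional ℝ V := Module.Basis.finiteDimensional_of_finite b
  have hrank : Module.finrank ℝ V = n + 1 := by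
    rw [Module.finrank_eq_card_basis b, Fintype.card_fin]
  -- nondegeneracy
  have hnd : ∀ v : V, (∀ w : V, B v w = 0) → v = 0 := by
    intro v hv
    rw [← b.forall_coord_eq_zero_iff]
    intro j
    have h1 : B v (b j) = 0 := hv _
    have h2 : B v (b j) = b.repr v j * (if (j : ℕ) = 0 then (-1 : ℝ) else 1) := by
      conv_lhs => rw [← b.sum_repr v]
      simp [-Module.Basis.sum_repr, map_sum, LinearMap.sum_apply, map_smul, LinearMap.smul_apply, hb,
        smul_eq_mul, mul_ite, mul_zero, Finset.sum_ite_eq]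
    have hε : (if (j : ℕ) = 0 then (-1 : ℝ) else 1) ≠ 0 := by
      split <;> norm_num
    have : b.repr v j = 0 := by
      have := h2 ▸ h1
      exact (mul_eq_zero.mp this).resolve_right hε
    simpa [Module.Basis.coord_apply] using this
  obtain ⟨u₀, hu₀U, hu₀ne, hu₀⟩ := hdeg
  have hφne : (B u₀ : V →ₗ[ℝ] ℝ) ≠ 0 := by
    intro h
    exact hu₀ne (hnd u₀ (fun w => by rw [h]; rfl))
  have hUker : U = LinearMap.ker (B u₀) := by
    apply Submodule.eq_of_le_of_finrank_eq
    · intro w hw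
      exact LinearMap.mem_ker.mpr (hu₀ w hw)
    · have hsurj : Function.Surjective (B u₀) := by
        obtain ⟨v, hv⟩ : ∃ v, B u₀ v ≠ 0 := by
          by_contra h
          push_neg at h
          exact hφne (LinearMap.ext fun w => h w)
        intro c
        refine ⟨(c / B u₀ v) • v, ?_⟩
        rw [map_smul, smul_eq_mul, div_mul_cancel₀ _ hv]
      have hr : Module.finrank ℝ (LinearMap.range (B u₀)) = 1 := by
        rw [LinearMap.range_eq_top.mpr hsurj]
        simp
      have hsum := LinearMap.finrank_range_add_finrank_ker (B u₀ : V →ₗ[ℝ] ℝ)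
      rw [hr, hrank] at hsum
      omega
  intro x
  by_cases hxU : x ∈ U
  · exact hfix x hxU
  have hBx : B u₀ x ≠ 0 := fun h => hxU (hUker ▸ LinearMap.mem_ker.mpr h)
  set d := f x - x with hdd
  have hd : ∀ w ∈ U, B d w = 0 := by
    intro w hw
    have h1 := hf x w
    rw [hfix w hw] at h1
    simp [hdd, map_sub, LinearMap.sub_apply, h1]
  have hsup : U ⊔ Submodule.span ℝ {x} = ⊤ := by
    have hxmem : x ∈ U ⊔ Submodule.span ℝ {x} :=
      Submodule.mem_sup_right (Submodule.mem_span_singleton_self x)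
    have hlt : U < U ⊔ Submodule.span ℝ {x} :=
      lt_of_le_of_ne le_sup_left (fun h => hxU (h ▸ hxmem))
    have h1 := Submodule.finrank_lt_finrank_of_lt hlt
    have h2 := Submodule.finrank_le (U ⊔ Submodule.span ℝ {x})
    apply Submodule.eq_top_of_finrank_eq
    rw [hrank]
    omega
  -- decompose d
  have hdmem : d ∈ U ⊔ Submodule.span ℝ {x} := hsup ▸ Submodule.mem_top
  obtain ⟨u, hu, z, hz, heq⟩ := Submodule.mem_sup.mp hdmem
  obtain ⟨t, rfl⟩ := Submodule.mem_span_singleton.mp hz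
  have hBu₀d : B u₀ d = 0 := by rw [hsymm u₀ d]; exact hd u₀ hu₀U
  have ht : t = 0 := by
    have : B u₀ d = t * B u₀ x := by
      rw [← heq, map_add, map_smul, hu₀ u hu, smul_eq_mul, zero_add]
    rw [hBu₀d] at this
    exact (mul_eq_zero.mp this.symm).resolve_right hBx
  have hdU : d ∈ U := by
    rw [← heq, ht, zero_smul, add_zero]; exact hu
  have hBdd : B d d = 0 := hd d hdU
  have hBdx : B d x = 0 := by
    have h1 := hf x x
    have hfx : f x = x + d := by rw [hdd]; abel
    rw [hfx] at h1
    simp only [map_add, LinearMap.add_apply] at h1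
    have hxd : B x d = B d x := hsymm x d
    nlinarith [h1, hxd, hBdd]
  have hdzero : d = 0 := by
    apply hnd
    intro w
    have hw : w ∈ U ⊔ Submodule.span ℝ {x} := hsup ▸ Submodule.mem_top
    obtain ⟨w', hw', z, hz, rfl⟩ := Submodule.mem_sup.mp hw
    obtain ⟨s, rfl⟩ := Submodule.mem_span_singleton.mp hz
    rw [map_add, map_smul, hd w' hw', hBdx, smul_zero, add_zero]
  have : f x - x = 0 := hdd ▸ hdzero
  exact sub_eq_zero.mp this
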